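/- arXiv:2110.00716 — 9 statements merged into one kernel-verified Lean document; each statement's English description precedes it below -/
import Mathlib

section
/- With K, S, T, C, U as above, the subspace L = ran K + S(ran K) satisfies U(L) ⊆ L, and in fact U(L) = L. -/
open Matrix

/-- The inherited subspace `L = ran K + S(ran K)` is invariant under `U`, and in fact
`U(L) = L`. -/
theorem inherited_subspace_invariant (m q : ℕ)
    (K : Matrix (Fin m) (Fin q) ℂ) (hK : Kᴴ * K = 1)
    (S : Matrix (Fin m) (Fin m) ℂ) (hSU : Sᴴ * S = 1) (hS2 : S * S = 1)
    (κ κ' : ℂ) (hκ : ‖κ‖ = 1) (hκ' : ‖κ'‖ = 1) (hne : κ ≠ κ')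
    (T : Matrix (Fin q) (Fin q) ℂ) (hT : T = Kᴴ * S * K)
    (C : Matrix (Fin m) (Fin m) ℂ) (hC : C = (κ - κ') • (K * Kᴴ) + κ' • 1)
    (U : Matrix (Fin m) (Fin m) ℂ) (hU : U = S * C) :
    Submodule.map U.mulVecLin
        (LinearMap.range K.mulVecLin ⊔
          Submodule.map S.mulVecLin (LinearMap.range K.mulVecLin)) =
      LinearMap.range K.mulVecLin ⊔
        Submodule.map S.mulVecLin (LinearMap.range K.mulVecLin) := by
  have hκ0 : κ ≠ 0 := fun h => by simp [h] at hκ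
  have hκ'0 : κ' ≠ 0 := fun h => by simp [h] at hκ'
  -- key matrix identities
  have hCK : C * K = κ • K := by
    rw [hC, Matrix.add_mul, Matrix.smul_mul, Matrix.smul_mul, Matrix.one_mul,
      Matrix.mul_assoc, hK, Matrix.mul_one, sub_smul]
    abel
  have hUK : U * K = κ • (S * K) := by
    rw [hU, Matrix.mul_assoc, hCK, Matrix.mul_smul]
  have hUSK : U * (S * K) = (κ - κ') • (S * (K * T)) + κ' • K := by
    have hCSK : C * (S * K) = (κ - κ') • (K * T) + κ' • (S * K) := by
      rw [hC, Matrix.add_mul, Matrix.smul_mul, Matrix.smul_mul, Matrix.one_mul, hT]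
      congr 1
      simp [Matrix.mul_assoc]
    rw [hU, Matrix.mul_assoc, hCSK, Matrix.mul_add, Matrix.mul_smul, Matrix.mul_smul,
      ← Matrix.mul_assoc, ← Matrix.mul_assoc, hS2, Matrix.one_mul]
  -- vector-level versions
  have h1 : ∀ g, U.mulVec (K.mulVec g) = κ • S.mulVec (K.mulVec g) := by
    intro g
    rw [Matrix.mulVec_mulVec, hUK, Matrix.smul_mulVec, ← Matrix.mulVec_mulVec]
  have h2 : ∀ g, U.mulVec (S.mulVec (K.mulVec g)) =
      (κ - κ') • S.mulVec (K.mulVec (T.mulVec g)) + κ' • K.mulVec g := by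
    intro g
    rw [Matrix.mulVec_mulVec, Matrix.mulVec_mulVec, Matrix.mul_assoc, hUSK, Matrix.add_mulVec,
      Matrix.smul_mulVec, Matrix.smul_mulVec, ← Matrix.mulVec_mulVec,
      ← Matrix.mulVec_mulVec]
  set L := LinearMap.range K.mulVecLin ⊔
      Submodule.map S.mulVecLin (LinearMap.range K.mulVecLin) with hL
  have memK : ∀ f, K.mulVec f ∈ L := fun f => Submodule.mem_sup_left ⟨f, rfl⟩
  have memSK : ∀ f, S.mulVec (K.mulVec f) ∈ L := fun f =>
    Submodule.mem_sup_right ⟨K.mulVec f, ⟨f, rfl⟩, rfl⟩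
  apply le_antisymm
  · rw [Submodule.map_le_iff_le_comap, hL]
    apply sup_le
    · rintro x ⟨f, rfl⟩
      simp only [Submodule.mem_comap, mulVecLin_apply, h1]
      exact Submodule.smul_mem _ _ (memSK f)
    · rintro x ⟨y, ⟨g, rfl⟩, rfl⟩
      simp only [Submodule.mem_comap, mulVecLin_apply, h2]
      exact Submodule.add_mem _ (Submodule.smul_mem _ _ (memSK (T.mulVec g)))
        (Submodule.smul_mem _ _ (memK g))
  · apply sup_le
    · rintro x ⟨f, rfl⟩
      refine ⟨(κ')⁻¹ • S.mulVec (K.mulVec f)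
        - ((κ - κ') / (κ * κ')) • K.mulVec (T.mulVec f), ?_, ?_⟩
      · exact Submodule.sub_mem _ (Submodule.smul_mem _ _ (memSK f))
          (Submodule.smul_mem _ _ (memK (T.mulVec f)))
      · simp only [mulVecLin_apply, Matrix.mulVec_sub, Matrix.mulVec_smul, h1, h2]
        match_scalars
        · field_simp
          ring
        · field_simp
    · rintro x ⟨y, ⟨f, rfl⟩, rfl⟩
      refine ⟨κ⁻¹ • K.mulVec f, Submodule.smul_mem _ _ (memK f), ?_⟩
      simp only [mulVecLin_apply, Matrix.mulVec_smul, h1]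
      rw [smul_smul, inv_mul_cancel₀ hκ0, one_smul]
end

section
/- Let K: ℂ^q → ℂ^{2m} with K*K = I_q, S unitary with S² = I, T = K*SK, and define L: ℂ^q ⊕ ℂ^q → ℂ^{2m} by L(f ⊕ g) = Kf + SKg. Then ker L = { f ⊕ g : f + Tg = 0 and Tf + g = 0 }, i.e. ker L equals the kernel of the block matrix [[I, T],[T, I]]. -/
open Matrix

lemma star_dotProduct_self_eq_zero_aux {n : ℕ} (v : Fin n → ℂ)
    (h : star v ⬝ᵥ v = 0) : v = 0 := by
  have h' : (↑(∑ i, Complex.normSq (v i)) : ℂ) = 0 := by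
    rw [← h]
    simp [dotProduct, Complex.normSq_eq_conj_mul_self]
  have hsum : ∑ i, Complex.normSq (v i) = 0 := by exact_mod_cast h'
  have hz : ∀ i ∈ Finset.univ, Complex.normSq (v i) = 0 :=
    (Finset.sum_eq_zero_iff_of_nonneg (fun i _ => Complex.normSq_nonneg (v i))).mp hsum
  funext i
  exact Complex.normSq_eq_zero.mp (hz i (Finset.mem_univ i))

/-- The kernel of `L(f ⊕ g) = Kf + SKg` is the kernel of the block matrix
`[[I, T],[T, I]]`: `Kf + SKg = 0 ↔ f + Tg = 0 ∧ Tf + g = 0`. -/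
theorem ker_L_eq_ker_block (m q : ℕ)
    (K : Matrix (Fin m) (Fin q) ℂ) (hK : Kᴴ * K = 1)
    (S : Matrix (Fin m) (Fin m) ℂ) (hSU : Sᴴ * S = 1) (hS2 : S * S = 1)
    (T : Matrix (Fin q) (Fin q) ℂ) (hT : T = Kᴴ * S * K) :
    ∀ f g : Fin q → ℂ,
      K.mulVec f + S.mulVec (K.mulVec g) = 0 ↔
        f + T.mulVec g = 0 ∧ T.mulVec f + g = 0 := by
  have hS : Sᴴ = S := by
    calc Sᴴ = Sᴴ * (S * S) := by rw [hS2, mul_one]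
    _ = (Sᴴ * S) * S := by rw [mul_assoc]
    _ = S := by rw [hSU, one_mul]
  have e : ∀ (A B : Matrix (Fin m) (Fin q) ℂ) (x y : Fin q → ℂ),
      star (A.mulVec x) ⬝ᵥ (B.mulVec y) = star x ⬝ᵥ ((Aᴴ * B).mulVec y) := by
    intro A B x y
    rw [star_mulVec, dotProduct_mulVec, vecMul_vecMul, ← dotProduct_mulVec]
  intro f g
  constructor
  · intro h
    constructor
    · have h1 := congrArg (Kᴴ.mulVec) h
      simp only [mulVec_add, mulVec_mulVec, mulVec_zero, hK, one_mulVec,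
        ← Matrix.mul_assoc, ← hT] at h1
      exact h1
    · have h2 := congrArg ((Kᴴ * S).mulVec) h
      have e1 : Kᴴ * S * S * K = 1 := by
        rw [Matrix.mul_assoc Kᴴ S S, hS2, Matrix.mul_one, hK]
      simp only [mulVec_add, mulVec_mulVec, mulVec_zero, ← Matrix.mul_assoc, ← hT,
        e1, one_mulVec] at h2
      exact h2
  · rintro ⟨h1, h2⟩
    set v := K.mulVec f + S.mulVec (K.mulVec g) with hv
    have hTH : (S * K)ᴴ * K = T := by rw [conjTranspose_mul, hS, hT]
    have hKSK : Kᴴ * (S * K) = T := by rw [← Matrix.mul_assoc, hT]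
    have hSKSK : (S * K)ᴴ * (S * K) = 1 := by
      rw [conjTranspose_mul, hS, Matrix.mul_assoc Kᴴ S (S * K),
        ← Matrix.mul_assoc S S K, hS2, Matrix.one_mul, hK]
    have expand : star v ⬝ᵥ v =
        (star f ⬝ᵥ f + star f ⬝ᵥ (T.mulVec g)) +
          (star g ⬝ᵥ (T.mulVec f) + star g ⬝ᵥ g) := by
      rw [hv, mulVec_mulVec]
      simp only [star_add, add_dotProduct, dotProduct_add, e,
        hK, hKSK, hTH, hSKSK, one_mulVec]
      ring
    have z1 : star f ⬝ᵥ f + star f ⬝ᵥ (T.mulVec g) = 0 := by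
      rw [← dotProduct_add, h1, dotProduct_zero]
    have z2 : star g ⬝ᵥ (T.mulVec f) + star g ⬝ᵥ g = 0 := by
      rw [← dotProduct_add, h2, dotProduct_zero]
    have key : star v ⬝ᵥ v = 0 := by rw [expand, z1, z2, add_zero]
    exact star_dotProduct_self_eq_zero_aux v key
end

section
/- With Λ = [[0, κ'I_q],[κI_q, (κ−κ')T]] where T is a self-adjoint q×q matrix and κ, κ' distinct unit complex numbers, ker(κ'²I − Λ²) equals the kernel of the block matrix [[I, T],[T, I]]. -/
open Matrix

private lemma elim_sum_zero {q : ℕ} (f g : Fin q → ℂ) :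
    (Sum.elim f g = 0) ↔ (f = 0 ∧ g = 0) := by
  constructor
  · intro h
    constructor <;> funext a
    · exact congrFun h (Sum.inl a)
    · exact congrFun h (Sum.inr a)
  · rintro ⟨h1, h2⟩; funext i; cases i <;> simp [h1, h2]

/-- For `Λ = [[0, κ'I],[κI, (κ-κ')T]]` with `T` self-adjoint and `κ ≠ κ'` unit complex
numbers, `ker (κ'² I - Λ²)` equals the kernel of the block matrix `[[I, T],[T, I]]`. -/
theorem ker_sq_eq_ker_block (q : ℕ)
    (T : Matrix (Fin q) (Fin q) ℂ) (hT : Tᴴ = T)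
    (κ κ' : ℂ) (hκ : ‖κ‖ = 1) (hκ' : ‖κ'‖ = 1) (hne : κ ≠ κ')
    (Λ : Matrix (Fin q ⊕ Fin q) (Fin q ⊕ Fin q) ℂ)
    (hΛ : Λ = Matrix.fromBlocks 0 (κ' • 1) (κ • 1) ((κ - κ') • T)) :
    ∀ v : Fin q ⊕ Fin q → ℂ,
      (κ' ^ 2 • (1 : Matrix (Fin q ⊕ Fin q) (Fin q ⊕ Fin q) ℂ) - Λ * Λ).mulVec v = 0 ↔
        (Matrix.fromBlocks 1 T T 1).mulVec v = 0 := by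
  intro v
  subst hΛ
  have hκ'0 : κ' ≠ 0 := fun h => by simp [h] at hκ'
  have hd : κ - κ' ≠ 0 := sub_ne_zero.mpr hne
  simp only [Matrix.fromBlocks_multiply, Matrix.sub_mulVec, Matrix.smul_mulVec,
    Matrix.one_mulVec, Matrix.fromBlocks_mulVec, Matrix.add_mulVec, Matrix.zero_mulVec,
    Matrix.mul_smul, Matrix.smul_mul, smul_smul, Matrix.zero_mul, Matrix.mul_zero,
    Matrix.one_mul, Matrix.mul_one, zero_add, add_zero, smul_zero, zero_smul]
  set x := v ∘ Sum.inl with hx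
  set y := v ∘ Sum.inr with hy
  have hsplit : κ' ^ 2 • v -
      ((κ * κ') • x + ((κ - κ') * κ') • T *ᵥ y ⊕ᵥ
        ((κ * (κ - κ')) • T *ᵥ x + ((κ' * κ) • y + ((κ - κ') * (κ - κ')) • (T * T) *ᵥ y))) =
      Sum.elim
        (κ' ^ 2 • x - ((κ * κ') • x + ((κ - κ') * κ') • T *ᵥ y))
        (κ' ^ 2 • y - ((κ * (κ - κ')) • T *ᵥ x + ((κ' * κ) • y + ((κ - κ') * (κ - κ')) • (T * T) *ᵥ y))) := by
    funext i; cases i <;> simp [x, y]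
  rw [hsplit, elim_sum_zero, elim_sum_zero]
  have hTT : (T * T) *ᵥ y = T *ᵥ (T *ᵥ y) := by rw [Matrix.mulVec_mulVec]
  rw [hTT]
  constructor
  · rintro ⟨h1, h2⟩
    have e1 : x + T *ᵥ y = 0 := by
      have : (-(((κ - κ') * κ'))) • (x + T *ᵥ y) = 0 := by
        linear_combination (norm := module) h1
      rcases smul_eq_zero.mp this with h | h
      · exact absurd h (by simp [hd, hκ'0])
      · exact h
    have hxy : x = -(T *ᵥ y) := by linear_combination (norm := module) e1
    have hTx : T *ᵥ x = -(T *ᵥ (T *ᵥ y)) := by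
      rw [hxy]; simp [Matrix.mulVec_neg]
    rw [hTx] at h2
    have e2 : T *ᵥ (T *ᵥ y) = y := by
      have : ((κ - κ') * κ') • (T *ᵥ (T *ᵥ y) - y) = 0 := by
        linear_combination (norm := module) h2
      rcases smul_eq_zero.mp this with h | h
      · exact absurd h (by simp [hd, hκ'0])
      · linear_combination (norm := module) h
    refine ⟨e1, ?_⟩
    rw [hTx, e2]
    simp
  · rintro ⟨h1, h2⟩
    have hTy : T *ᵥ y = -x := by linear_combination (norm := module) h1
    have hTx : T *ᵥ x = -y := by linear_combination (norm := module) h2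
    have hTT2 : T *ᵥ (T *ᵥ y) = y := by rw [hTy]; simp [Matrix.mulVec_neg, hTx]
    constructor
    · rw [hTy]; module
    · rw [hTx, hTT2]; module
end

section
/- Let G be a finite connected graph with m edges and n vertices, U = SC where S is the flip-flop shift on the 2m arcs and C = ⊕_u C_u with each C_u unitary having Spec(C_u) ⊆ {κ, κ'} and dim ker(κ − C_u) = p for all u (κ ≠ κ' unit complex numbers, 1 ≤ p ≤ min degree). Then det(λ I_{2m} − U) = (λ² − κ'²)^{m − pn} · det((λ² − κκ')I_{pn} − (κ − κ')λ T), where T = K*SK is the pn×pn discriminant matrix. -/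
open Matrix

set_option maxHeartbeats 1000000

/-- Spectral mapping determinant formula (Theorem 5.1): for the quantum walk `U = SC`
on a graph with `m` edges and `n` vertices, with boundary operator `K` (an isometry),
flip-flop shift `S`, coin `C = (κ-κ')KK* + κ'I`, and discriminant `T = K*SK`,
`det(λ - U) = (λ² - κ'²)^{m - pn} det((λ² - κκ') - (κ-κ')λ T)`, written here in the
polynomial-identity form multiplied through by `(λ² - κ'²)^{pn}`. -/
theorem spectral_mapping_det (m n p : ℕ) (hp : 1 ≤ p)
    (K : Matrix (Fin 2 × Fin m) (Fin (p * n)) ℂ) (hK : Kᴴ * K = 1)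
    (S : Matrix (Fin 2 × Fin m) (Fin 2 × Fin m) ℂ)
    (hS : ∃ P : Matrix (Fin 2 × Fin m) (Fin 2 × Fin m) ℂ, Pᴴ * P = 1 ∧
      S = P * Matrix.blockDiagonal (fun _ : Fin m => !![(0 : ℂ), 1; 1, 0]) * Pᴴ)
    (κ κ' : ℂ) (hκ : ‖κ‖ = 1) (hκ' : ‖κ'‖ = 1) (hne : κ ≠ κ')
    (T : Matrix (Fin (p * n)) (Fin (p * n)) ℂ) (hT : T = Kᴴ * S * K)
    (C : Matrix (Fin 2 × Fin m) (Fin 2 × Fin m) ℂ)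
    (hC : C = (κ - κ') • (K * Kᴴ) + κ' • 1)
    (U : Matrix (Fin 2 × Fin m) (Fin 2 × Fin m) ℂ) (hU : U = S * C) :
    ∀ lam : ℂ,
      (lam ^ 2 - κ' ^ 2) ^ (p * n) * (lam • (1 : Matrix (Fin 2 × Fin m) (Fin 2 × Fin m) ℂ) - U).det =
        (lam ^ 2 - κ' ^ 2) ^ m *
          ((lam ^ 2 - κ * κ') • (1 : Matrix (Fin (p * n)) (Fin (p * n)) ℂ)
            - ((κ - κ') * lam) • T).det := by
  obtain ⟨P, hP, hSP⟩ := hS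
  have hPP : P * Pᴴ = 1 := mul_eq_one_comm.mp hP
  set D : Matrix (Fin 2 × Fin m) (Fin 2 × Fin m) ℂ :=
    Matrix.blockDiagonal (fun _ : Fin m => !![(0 : ℂ), 1; 1, 0]) with hD
  have hDD : D * D = 1 := by
    rw [hD, ← Matrix.blockDiagonal_mul]
    have hblk : (fun _ : Fin m => !![(0 : ℂ), 1; 1, 0] * !![(0 : ℂ), 1; 1, 0])
        = fun _ : Fin m => (1 : Matrix (Fin 2) (Fin 2) ℂ) := by
      funext k
      ext i j
      fin_cases i <;> fin_cases j <;>
        simp [Matrix.mul_apply, Fin.sum_univ_two, Matrix.one_apply]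
    rw [hblk]
    exact Matrix.blockDiagonal_one
  have hSS : S * S = 1 := by
    rw [hSP]
    simp only [Matrix.mul_assoc]
    rw [← Matrix.mul_assoc Pᴴ P, hP, Matrix.one_mul, ← Matrix.mul_assoc D D, hDD,
      Matrix.one_mul, hPP]
  have hdetP : Pᴴ.det * P.det = 1 := by
    rw [← Matrix.det_mul, hP, Matrix.det_one]
  -- determinant of `lam • 1 + c • S`
  have hdetB : ∀ lam c : ℂ,
      (lam • (1 : Matrix (Fin 2 × Fin m) (Fin 2 × Fin m) ℂ) + c • S).det
        = (lam ^ 2 - c ^ 2) ^ m := by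
    intro lam c
    have h1 : lam • (1 : Matrix (Fin 2 × Fin m) (Fin 2 × Fin m) ℂ) + c • S
        = P * (lam • 1 + c • D) * Pᴴ := by
      rw [hSP]
      simp only [Matrix.mul_add, Matrix.add_mul, Matrix.mul_smul, Matrix.smul_mul,
        Matrix.mul_one, Matrix.one_mul, Matrix.mul_assoc]
      rw [hPP]
    have h2 : lam • (1 : Matrix (Fin 2 × Fin m) (Fin 2 × Fin m) ℂ) + c • D
        = Matrix.blockDiagonal (fun _ : Fin m => !![lam, c; c, lam]) := by
      ext ⟨i, u⟩ ⟨j, v⟩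
      fin_cases i <;> fin_cases j <;> rcases eq_or_ne u v with huv | huv <;>
        simp [hD, Matrix.blockDiagonal_apply, Matrix.one_apply, Prod.ext_iff, huv]
    rw [h1, Matrix.det_mul, Matrix.det_mul, h2, Matrix.det_blockDiagonal]
    have h3 : ∀ u : Fin m, (!![lam, c; c, lam]).det = lam ^ 2 - c ^ 2 := by
      intro u; rw [Matrix.det_fin_two_of]; ring
    rw [Finset.prod_congr rfl (fun u _ => h3 u), Finset.prod_const, Finset.card_univ,
      Fintype.card_fin]
    calc P.det * (lam ^ 2 - c ^ 2) ^ m * Pᴴ.det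
        = (lam ^ 2 - c ^ 2) ^ m * (Pᴴ.det * P.det) := by ring
      _ = (lam ^ 2 - c ^ 2) ^ m := by rw [hdetP, mul_one]
  -- main identity away from λ² = κ'²
  have key : ∀ lam : ℂ, lam ^ 2 - κ' ^ 2 ≠ 0 →
      (lam ^ 2 - κ' ^ 2) ^ (p * n) *
          (lam • (1 : Matrix (Fin 2 × Fin m) (Fin 2 × Fin m) ℂ) - U).det =
        (lam ^ 2 - κ' ^ 2) ^ m *
          ((lam ^ 2 - κ * κ') • (1 : Matrix (Fin (p * n)) (Fin (p * n)) ℂ)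
            - ((κ - κ') * lam) • T).det := by
    intro lam h
    obtain ⟨X, hX⟩ : ∃ X : Matrix (Fin 2 × Fin m) (Fin (p * n)) ℂ,
        X = (κ - κ') • ((lam • S + κ' • 1) * K) := ⟨_, rfl⟩
    have hprod : (lam • (1 : Matrix (Fin 2 × Fin m) (Fin 2 × Fin m) ℂ) + κ' • S) *
        (lam • 1 - U) = (lam ^ 2 - κ' ^ 2) • 1 - X * Kᴴ := by
      rw [hX, hU, hC]
      have hSSK : S * (S * (K * Kᴴ)) = K * Kᴴ := by
        rw [← Matrix.mul_assoc, hSS, Matrix.one_mul]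
      simp only [Matrix.mul_sub, Matrix.mul_add, Matrix.add_mul, Matrix.smul_mul,
        Matrix.mul_smul, Matrix.mul_one, Matrix.one_mul, smul_add, smul_smul,
        Matrix.mul_assoc, hSS, hSSK]
      module
    have hsmall : Kᴴ * ((lam ^ 2 - κ' ^ 2)⁻¹ • X)
        = ((lam ^ 2 - κ' ^ 2)⁻¹ * (κ - κ')) • (lam • T + κ' • 1) := by
      rw [hX, hT]
      simp only [Matrix.mul_smul, Matrix.mul_add, Matrix.add_mul, Matrix.smul_mul,
        Matrix.one_mul, smul_add, smul_smul, Matrix.mul_assoc]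
      rw [hK]
      module
    have hXY : (lam ^ 2 - κ' ^ 2) • (1 : Matrix (Fin 2 × Fin m) (Fin 2 × Fin m) ℂ) - X * Kᴴ
        = (lam ^ 2 - κ' ^ 2) • (1 - ((lam ^ 2 - κ' ^ 2)⁻¹ • X) * Kᴴ) := by
      have e : (lam ^ 2 - κ' ^ 2) • (((lam ^ 2 - κ' ^ 2)⁻¹ • X) * Kᴴ) = X * Kᴴ := by
        rw [Matrix.smul_mul, smul_smul, mul_inv_cancel₀ h, one_smul]
      rw [smul_sub, e]
    have h1s : (lam ^ 2 - κ' ^ 2) •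
          ((1 : Matrix (Fin (p * n)) (Fin (p * n)) ℂ) - Kᴴ * ((lam ^ 2 - κ' ^ 2)⁻¹ • X))
        = (lam ^ 2 - κ * κ') • 1 - ((κ - κ') * lam) • T := by
      rw [hsmall]
      match_scalars <;> field_simp <;> ring
    have hcard1 : Fintype.card (Fin 2 × Fin m) = 2 * m := by
      simp [Fintype.card_prod]
    have hcard2 : Fintype.card (Fin (p * n)) = p * n := by simp
    apply mul_left_cancel₀ (pow_ne_zero m h)
    calc (lam ^ 2 - κ' ^ 2) ^ m * ((lam ^ 2 - κ' ^ 2) ^ (p * n) *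
            (lam • (1 : Matrix (Fin 2 × Fin m) (Fin 2 × Fin m) ℂ) - U).det)
        = (lam ^ 2 - κ' ^ 2) ^ (p * n) *
            ((lam • (1 : Matrix (Fin 2 × Fin m) (Fin 2 × Fin m) ℂ) + κ' • S).det *
              (lam • 1 - U).det) := by rw [hdetB lam κ']; ring
      _ = (lam ^ 2 - κ' ^ 2) ^ (p * n) *
            ((lam • (1 : Matrix (Fin 2 × Fin m) (Fin 2 × Fin m) ℂ) + κ' • S) *
              (lam • 1 - U)).det := by rw [Matrix.det_mul]
      _ = (lam ^ 2 - κ' ^ 2) ^ (p * n) *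
            ((lam ^ 2 - κ' ^ 2) • (1 - ((lam ^ 2 - κ' ^ 2)⁻¹ • X) * Kᴴ)).det := by
          rw [hprod, hXY]
      _ = (lam ^ 2 - κ' ^ 2) ^ (p * n) * ((lam ^ 2 - κ' ^ 2) ^ (2 * m) *
            (1 - ((lam ^ 2 - κ' ^ 2)⁻¹ • X) * Kᴴ).det) := by
          rw [Matrix.det_smul, hcard1]
      _ = (lam ^ 2 - κ' ^ 2) ^ (2 * m) * ((lam ^ 2 - κ' ^ 2) ^ (p * n) *
            (1 - Kᴴ * ((lam ^ 2 - κ' ^ 2)⁻¹ • X)).det) := by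
          rw [Matrix.det_one_sub_mul_comm]; ring
      _ = (lam ^ 2 - κ' ^ 2) ^ (2 * m) *
            ((lam ^ 2 - κ' ^ 2) •
              ((1 : Matrix (Fin (p * n)) (Fin (p * n)) ℂ) -
                Kᴴ * ((lam ^ 2 - κ' ^ 2)⁻¹ • X))).det := by
          rw [Matrix.det_smul, hcard2]
      _ = (lam ^ 2 - κ' ^ 2) ^ (2 * m) *
            ((lam ^ 2 - κ * κ') • (1 : Matrix (Fin (p * n)) (Fin (p * n)) ℂ)
              - ((κ - κ') * lam) • T).det := by rw [h1s]
      _ = (lam ^ 2 - κ' ^ 2) ^ m * ((lam ^ 2 - κ' ^ 2) ^ m *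
            ((lam ^ 2 - κ * κ') • (1 : Matrix (Fin (p * n)) (Fin (p * n)) ℂ)
              - ((κ - κ') * lam) • T).det) := by rw [two_mul, pow_add]; ring
  -- extend to all λ by continuity and density
  have hf : Continuous fun lam : ℂ => (lam ^ 2 - κ' ^ 2) ^ (p * n) *
      (lam • (1 : Matrix (Fin 2 × Fin m) (Fin 2 × Fin m) ℂ) - U).det := by
    apply Continuous.mul
    · fun_prop
    · exact Continuous.matrix_det ((continuous_id.smul continuous_const).sub continuous_const)
  have hg : Continuous fun lam : ℂ => (lam ^ 2 - κ' ^ 2) ^ m *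
      ((lam ^ 2 - κ * κ') • (1 : Matrix (Fin (p * n)) (Fin (p * n)) ℂ)
        - ((κ - κ') * lam) • T).det := by
    apply Continuous.mul
    · fun_prop
    · exact Continuous.matrix_det
        (((by fun_prop : Continuous fun lam : ℂ => lam ^ 2 - κ * κ').smul
            continuous_const).sub
          ((by fun_prop : Continuous fun lam : ℂ => (κ - κ') * lam).smul continuous_const))
  have hfin : {lam : ℂ | lam ^ 2 - κ' ^ 2 = 0}.Finite := by
    apply Set.Finite.subset ((Set.finite_singleton (-κ')).insert κ')
    intro x hx
    have hx' : (x - κ') * (x + κ') = 0 := by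
      have h0 : x ^ 2 - κ' ^ 2 = 0 := hx
      linear_combination h0
    simp only [Set.mem_insert_iff, Set.mem_singleton_iff]
    rcases mul_eq_zero.mp hx' with h1 | h1
    · left; linear_combination h1
    · right; linear_combination h1
  have hdense : Dense {lam : ℂ | lam ^ 2 - κ' ^ 2 = 0}ᶜ :=
    Set.Countable.dense_compl ℂ hfin.countable
  have heq := Continuous.ext_on hdense hf hg (fun lam hlam => key lam hlam)
  exact fun lam => congrFun heq lam
end

section
/- Let σ be the 2d×2d permutation matrix acting as the transposition (2j−1 ↔ 2j) in each consecutive pair, and Gr(2d) = (2/(2d))J − I the 2d-dimensional Grover matrix (J the all-ones matrix). Then C'_d := σ·Gr(2d) satisfies: Spec(C'_d) = {1, −1}, dim ker(I − C'_d) = d + 1, and dim ker(I + C'_d) = d − 1, for d ≥ 2. -/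
open Matrix

private lemma msc_sigma_mulVec (d : ℕ) (x : Fin 2 × Fin d → ℂ) (i : Fin 2) (j : Fin d) :
    (Matrix.blockDiagonal (fun _ : Fin d => !![(0 : ℂ), 1; 1, 0]) *ᵥ x) (i, j) = x (i + 1, j) := by
  simp only [Matrix.mulVec, dotProduct, Fintype.sum_prod_type,
    Matrix.blockDiagonal_apply, ite_mul, zero_mul]
  fin_cases i <;>
    simp [Fin.sum_univ_two, Finset.sum_ite_eq, Fin.isValue]

private lemma msc_J_mulVec (d : ℕ) (x : Fin 2 × Fin d → ℂ) (p : Fin 2 × Fin d) :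
    ((Matrix.of fun _ _ => (1 : ℂ)) *ᵥ x) p = ∑ b, x b := by
  simp [Matrix.mulVec, dotProduct]

/-- For `C'_d = σ · Gr(2d)` with `σ` the pairwise swap and `Gr(2d)` the Grover matrix,
the spectrum is `{1, -1}` with `dim ker(I - C') = d + 1` and `dim ker(I + C') = d - 1`. -/
theorem moving_shift_coin_spectrum (d : ℕ) (hd : 2 ≤ d)
    (σ Gr C' : Matrix (Fin 2 × Fin d) (Fin 2 × Fin d) ℂ)
    (hσ : σ = Matrix.blockDiagonal (fun _ : Fin d => !![(0 : ℂ), 1; 1, 0]))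
    (hGr : Gr = ((2 : ℂ) / (2 * d)) • Matrix.of (fun _ _ => (1 : ℂ)) - 1)
    (hC' : C' = σ * Gr) :
    spectrum ℂ C' = {1, -1} ∧
      Module.finrank ℂ (LinearMap.ker (1 - C').mulVecLin) = d + 1 ∧
      Module.finrank ℂ (LinearMap.ker (1 + C').mulVecLin) = d - 1 := by
  have hd0 : (d : ℂ) ≠ 0 := Nat.cast_ne_zero.mpr (by omega)
  set c : ℂ := (d : ℂ)⁻¹ with hc
  set J : Matrix (Fin 2 × Fin d) (Fin 2 × Fin d) ℂ := Matrix.of fun _ _ => (1 : ℂ) with hJ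
  -- σ * J = J
  have hσJ : σ * J = J := by
    ext p q
    have := msc_sigma_mulVec d (fun _ => (1 : ℂ)) p.1 p.2
    simpa [Matrix.mul_apply, Matrix.mulVec, dotProduct, hσ, hJ] using this
  -- coefficient simplification
  have hcoef : (2 : ℂ) / (2 * d) = c := by
    rw [hc]; field_simp
  -- decomposition of C'
  have hC'd : C' = c • J - σ := by
    rw [hC', hGr, hcoef, Matrix.mul_sub, Matrix.mul_smul, hσJ, mul_one]
  -- mulVec formula for C'
  have hCmv : ∀ x : Fin 2 × Fin d → ℂ, ∀ i j,
      (C' *ᵥ x) (i, j) = c * (∑ b, x b) - x (i + 1, j) := by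
    intro x i j
    rw [hC'd, Matrix.sub_mulVec, Matrix.smul_mulVec, hσ]
    simp [msc_sigma_mulVec, msc_J_mulVec d x (i, j), hJ]
  -- C' is an involution
  have hC2 : C' * C' = 1 := by
    ext p q
    rcases p with ⟨i, j⟩
    rcases q with ⟨qi, qj⟩
    have h1 : (C' * C') ⟨i, j⟩ (qi, qj) = (C' *ᵥ fun b => C' b (qi, qj)) (i, j) := by
      simp [Matrix.mul_apply, Matrix.mulVec, dotProduct]
    rw [h1, hCmv]
    have hrow : ∀ i' j', C' (i', j') (qi, qj) = c - (if (qi, qj) = ((i' : Fin 2) + 1, j') then 1 else 0) := by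
      intro i' j'
      rw [hC'd, hσ]
      simp only [Matrix.sub_apply, Matrix.smul_apply, hJ, Matrix.of_apply, smul_eq_mul, mul_one,
        Matrix.blockDiagonal_apply, Prod.mk.injEq]
      congr 1
      fin_cases i' <;> fin_cases qi <;> by_cases h : j' = qj <;>
        simp [h, eq_comm] <;>
        exact (fun hh => h hh.symm)
    have hsum : (∑ b : Fin 2 × Fin d, C' b (qi, qj)) = 2 * d * c - 1 := by
      rw [Fintype.sum_prod_type]
      simp only [hrow]
      rw [Fin.sum_univ_two]
      have e0 : ∀ i' : Fin 2, (∑ j' : Fin d, (c - if (qi, qj) = ((i' : Fin 2) + 1, j') then 1 else 0))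
          = d * c - (if qi = i' + 1 then 1 else 0) := by
        intro i'
        rw [Finset.sum_sub_distrib, Finset.sum_const, Finset.card_univ, Fintype.card_fin]
        congr 1
        · simp [nsmul_eq_mul]
        · simp only [Prod.mk.injEq, ite_and]
          by_cases h : qi = i' + 1
          · simp [h, Finset.sum_ite_eq]
          · simp [h]
        done
      rw [e0 0, e0 1]
      have : (qi = (0 : Fin 2) + 1 ∧ ¬ qi = (1 : Fin 2) + 1) ∨ (¬ qi = (0 : Fin 2) + 1 ∧ qi = (1 : Fin 2) + 1) := by
        fin_cases qi <;> simp <;> decide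
      rcases this with ⟨h1', h2'⟩ | ⟨h1', h2'⟩ <;> simp [h1', h2'] <;> ring
    rw [hsum, hrow]
    have hq : ∀ i'' : Fin 2, i'' + 1 + 1 = i'' := by decide
    have hcc : c * (2 * d * c - 1) = 2 * c - c := by
      rw [hc]; field_simp; try ring
    rw [hcc, hq i, Matrix.one_apply]
    by_cases h : ((i, j) : Fin 2 × Fin d) = (qi, qj)
    · rw [if_pos h.symm, if_pos h]; ring
    · rw [if_neg (fun hh => h hh.symm), if_neg h]; ring
  -- membership characterization in ker (1 + C')
  have hmem : ∀ x : Fin 2 × Fin d → ℂ, x ∈ LinearMap.ker (1 + C').mulVecLin ↔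
      ∀ i j, x (i, j) + (c * (∑ b, x b) - x (i + 1, j)) = 0 := by
    intro x
    rw [LinearMap.mem_ker, Matrix.mulVecLin_apply, Matrix.add_mulVec, Matrix.one_mulVec]
    constructor
    · intro h i j
      have := congrFun h (i, j)
      simpa [hCmv x i j] using this
    · intro h
      funext p
      rcases p with ⟨i, j⟩
      simpa [hCmv x i j] using h i j
  -- the sum functional on Fin d → ℂ
  set sumL : (Fin d → ℂ) →ₗ[ℂ] ℂ := ∑ j : Fin d, LinearMap.proj j with hsumL
  have hsumL_apply : ∀ y : Fin d → ℂ, sumL y = ∑ j, y j := by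
    intro y; simp [hsumL]
  set W : Submodule ℂ (Fin d → ℂ) := LinearMap.ker sumL with hW
  set g : (Fin d → ℂ) →ₗ[ℂ] (Fin 2 × Fin d → ℂ) :=
    LinearMap.funLeft ℂ ℂ (Prod.snd : Fin 2 × Fin d → Fin d) with hg
  have hginj : Function.Injective g :=
    LinearMap.funLeft_injective_of_surjective ℂ ℂ _ (fun j => ⟨(0, j), rfl⟩)
  -- key: ker (1 + C') = map g W
  have hker_eq : LinearMap.ker (1 + C').mulVecLin = Submodule.map g W := by
    ext x
    rw [hmem]
    constructor
    · intro h
      have key1 : ∀ j, x (1, j) = x (0, j) := by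
        intro j
        have h0 := h 0 j
        have h1 := h 1 j
        have e0 : ((0 : Fin 2) + 1) = 1 := by decide
        have e1 : ((1 : Fin 2) + 1) = 0 := by decide
        rw [e0] at h0; rw [e1] at h1
        linear_combination (h1 - h0) / 2
      have keyS : (∑ b, x b) = 0 := by
        have h0 := h 0 ⟨0, by omega⟩
        have h1 := h 1 ⟨0, by omega⟩
        have e0 : ((0 : Fin 2) + 1) = 1 := by decide
        have e1 : ((1 : Fin 2) + 1) = 0 := by decide
        rw [e0] at h0; rw [e1] at h1
        have hcS : c * (∑ b, x b) = 0 := by linear_combination (h0 + h1) / 2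
        have : c ≠ 0 := by rw [hc]; exact inv_ne_zero hd0
        exact (mul_eq_zero.mp hcS).resolve_left this
      refine ⟨fun j => x (0, j), ?_, ?_⟩
      · simp only [hW, SetLike.mem_coe, LinearMap.mem_ker, hsumL_apply]
        have : (∑ b, x b) = (∑ j, x (0, j)) + (∑ j, x (1, j)) := by
          rw [Fintype.sum_prod_type, Fin.sum_univ_two]
        rw [this] at keyS
        have : (∑ j, x (1, j)) = ∑ j, x (0, j) := by
          exact Finset.sum_congr rfl fun j _ => key1 j
        rw [this] at keyS
        linear_combination keyS / 2
      · funext p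
        rcases p with ⟨i, j⟩
        fin_cases i
        · rfl
        · exact (key1 j).symm
    · rintro ⟨y, hy, rfl⟩
      simp only [hW, SetLike.mem_coe, LinearMap.mem_ker, hsumL_apply] at hy
      intro i j
      have hgS : (∑ b : Fin 2 × Fin d, (g y) b) = 0 := by
        rw [Fintype.sum_prod_type, Fin.sum_univ_two]
        simp only [hg, LinearMap.funLeft_apply]
        rw [hy]; ring
      have hgv : ∀ p : Fin 2 × Fin d, (g y) p = y p.2 := fun p => rfl
      rw [hgS, hgv, hgv]
      simp
  -- dim W = d - 1
  have hWrank : Module.finrank ℂ W = d - 1 := by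
    have hsurj : Function.Surjective sumL := by
      intro z
      refine ⟨Pi.single (⟨0, by omega⟩ : Fin d) z, ?_⟩
      rw [hsumL_apply]
      simp [Finset.sum_pi_single']
    have hrange : LinearMap.range sumL = ⊤ := LinearMap.range_eq_top.mpr hsurj
    have := LinearMap.finrank_range_add_finrank_ker sumL
    rw [hrange, finrank_top, Module.finrank_self, Module.finrank_fintype_fun_eq_card,
      Fintype.card_fin] at this
    rw [hW]
    omega
  -- dim ker (1 + C') = d - 1
  have hkerplus : Module.finrank ℂ (LinearMap.ker (1 + C').mulVecLin) = d - 1 := by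
    rw [hker_eq, ← LinearEquiv.finrank_eq (Submodule.equivMapOfInjective g hginj W)]
    exact hWrank
  -- direct sum decomposition
  set p : Submodule ℂ (Fin 2 × Fin d → ℂ) := LinearMap.ker (1 - C').mulVecLin with hp
  set q : Submodule ℂ (Fin 2 × Fin d → ℂ) := LinearMap.ker (1 + C').mulVecLin with hq
  have hpq_inf : p ⊓ q = ⊥ := by
    rw [eq_bot_iff]
    intro x hx
    rw [Submodule.mem_inf] at hx
    obtain ⟨hxp, hxq⟩ := hx
    rw [hp, LinearMap.mem_ker, Matrix.mulVecLin_apply, Matrix.sub_mulVec, Matrix.one_mulVec,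
      sub_eq_zero] at hxp
    rw [hq, LinearMap.mem_ker, Matrix.mulVecLin_apply, Matrix.add_mulVec, Matrix.one_mulVec,
      add_eq_zero_iff_eq_neg] at hxq
    rw [← hxp] at hxq
    have h2 : (2 : ℂ) • x = 0 := by
      rw [two_smul]
      nth_rewrite 1 [hxq]
      simp
    have hx0 : x = 0 := by
      rcases smul_eq_zero.mp h2 with h | h
      · norm_num at h
      · exact h
    exact hx0 ▸ Submodule.zero_mem ⊥
  have hpq_sup : p ⊔ q = ⊤ := by
    rw [eq_top_iff]
    intro x _
    have hdecomp : x = (2 : ℂ)⁻¹ • (x + C' *ᵥ x) + (2 : ℂ)⁻¹ • (x - C' *ᵥ x) := by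
      rw [smul_add, smul_sub]
      module
    have hCC : ∀ v : Fin 2 × Fin d → ℂ, C' *ᵥ (C' *ᵥ v) = v := by
      intro v
      rw [Matrix.mulVec_mulVec, hC2, Matrix.one_mulVec]
    have hmem1 : (2 : ℂ)⁻¹ • (x + C' *ᵥ x) ∈ p := by
      rw [hp, LinearMap.mem_ker, Matrix.mulVecLin_apply, Matrix.sub_mulVec, Matrix.one_mulVec,
        Matrix.mulVec_smul, Matrix.mulVec_add, hCC]
      module
    have hmem2 : (2 : ℂ)⁻¹ • (x - C' *ᵥ x) ∈ q := by
      rw [hq, LinearMap.mem_ker, Matrix.mulVecLin_apply, Matrix.add_mulVec, Matrix.one_mulVec,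
        Matrix.mulVec_smul, Matrix.mulVec_sub, hCC]
      module
    rw [hdecomp]
    exact Submodule.add_mem_sup hmem1 hmem2
  have htotal := Submodule.finrank_sup_add_finrank_inf_eq p q
  rw [hpq_sup, hpq_inf, finrank_top, Module.finrank_fintype_fun_eq_card,
    Fintype.card_prod, Fintype.card_fin, Fintype.card_fin, finrank_bot] at htotal
  have hkerminus : Module.finrank ℂ p = d + 1 := by
    omega
  -- spectrum
  have hne_ker : ∀ (M : Matrix (Fin 2 × Fin d) (Fin 2 × Fin d) ℂ),
      0 < Module.finrank ℂ (LinearMap.ker M.mulVecLin) → M.det = 0 := by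
    intro M hM
    have hne : LinearMap.ker M.mulVecLin ≠ ⊥ := by
      intro hbot
      rw [hbot] at hM
      simp [finrank_bot] at hM
    obtain ⟨v, hv, hv0⟩ := Submodule.ne_bot_iff _ |>.mp hne
    rw [LinearMap.mem_ker, Matrix.mulVecLin_apply] at hv
    exact Matrix.exists_mulVec_eq_zero_iff.mp ⟨v, hv0, hv⟩
  have hspec : spectrum ℂ C' = {1, -1} := by
    ext μ
    simp only [Set.mem_insert_iff, Set.mem_singleton_iff, spectrum.mem_iff]
    constructor
    · intro hμ
      have hdet : ((algebraMap ℂ (Matrix (Fin 2 × Fin d) (Fin 2 × Fin d) ℂ)) μ - C').det = 0 := by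
        by_contra h
        exact hμ ((Matrix.isUnit_iff_isUnit_det _).mpr (isUnit_iff_ne_zero.mpr h))
      obtain ⟨v, hv0, hv⟩ := Matrix.exists_mulVec_eq_zero_iff.mpr hdet
      rw [Matrix.sub_mulVec, sub_eq_zero] at hv
      have halg : (algebraMap ℂ (Matrix (Fin 2 × Fin d) (Fin 2 × Fin d) ℂ)) μ *ᵥ v = μ • v := by
        rw [Algebra.algebraMap_eq_smul_one, Matrix.smul_mulVec, Matrix.one_mulVec]
      rw [halg] at hv
      have h2 : (μ * μ) • v = v := by
        calc (μ * μ) • v = μ • (μ • v) := by rw [smul_smul]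
          _ = μ • (C' *ᵥ v) := by rw [hv]
          _ = C' *ᵥ (μ • v) := (Matrix.mulVec_smul _ _ _).symm
          _ = C' *ᵥ (C' *ᵥ v) := by rw [hv]
          _ = v := by rw [Matrix.mulVec_mulVec, hC2, Matrix.one_mulVec]
      have hμ2 : μ * μ = 1 := by
        by_contra hne
        have : (μ * μ - 1) • v = 0 := by
          rw [sub_smul, one_smul, h2, sub_self]
        exact hv0 (smul_eq_zero.mp this |>.resolve_left (sub_ne_zero.mpr hne))
      exact mul_self_eq_one_iff.mp hμ2
    · rintro (rfl | rfl)
      · intro hu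
        rw [_root_.map_one] at hu
        have hdet := hne_ker (1 - C') (by rw [← hp, hkerminus]; omega)
        exact (isUnit_iff_ne_zero.mp ((Matrix.isUnit_iff_isUnit_det _).mp hu)) hdet
      · intro hu
        rw [_root_.map_neg, _root_.map_one] at hu
        have heq : (-1 : Matrix (Fin 2 × Fin d) (Fin 2 × Fin d) ℂ) - C' = -(1 + C') := by abel
        rw [heq] at hu
        have hdet := hne_ker (1 + C') (by rw [← hq, hkerplus]; omega)
        exact (isUnit_iff_ne_zero.mp ((Matrix.isUnit_iff_isUnit_det _).mp hu.neg)) (by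
          simpa using hdet)
  exact ⟨hspec, hkerminus, hkerplus⟩
end

section
/- With C'_d = σ·Gr(2d) as above and ω = e^{2πi/d}, the d−1 vectors v_ℓ = (1/√(2d))·[1, ω^ℓ, …, ω^{(d−1)ℓ}]^⊤ ⊗ [1, 1]^⊤ for ℓ = 1, …, d−1 form an orthonormal basis of ker(−1 − C'_d). -/
open Matrix

lemma aux_sum_pow {d : ℕ} (μ : ℂ) (hμ : μ ^ d = 1) :
    ∑ j : Fin d, μ ^ (j : ℕ) = if μ = 1 then (d : ℂ) else 0 := by
  rw [Fin.sum_univ_eq_sum_range]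
  split_ifs with h
  · simp [h]
  · rw [geom_sum_eq h, hμ, sub_self, zero_div]

lemma aux_sum_pow' {d : ℕ} (hd : d ≠ 0) (μ : ℂ) (hμ : μ ^ d = 1) :
    ∑ ℓ : Fin (d - 1), μ ^ ((ℓ : ℕ) + 1) = (if μ = 1 then (d : ℂ) else 0) - 1 := by
  rw [← aux_sum_pow μ hμ,
    Fin.sum_univ_eq_sum_range (fun i => μ ^ (i + 1)) (d - 1),
    Fin.sum_univ_eq_sum_range (fun i => μ ^ i) d]
  obtain ⟨e, rfl⟩ : ∃ e, d = e + 1 := ⟨d - 1, by omega⟩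
  rw [Finset.sum_range_succ']
  simp

/-- The `d-1` vectors `(1/√(2d))·[1, ω^ℓ, …, ω^{(d-1)ℓ}] ⊗ [1,1]` (with `ω = e^{2πi/d}`)
form an orthonormal basis of `ker(-1 - C'_d)` where `C'_d = σ · Gr(2d)`. -/
theorem moving_shift_coin_neg_eigenbasis (d : ℕ) (hd : 2 ≤ d)
    (σ Gr C' : Matrix (Fin 2 × Fin d) (Fin 2 × Fin d) ℂ)
    (hσ : σ = Matrix.blockDiagonal (fun _ : Fin d => !![(0 : ℂ), 1; 1, 0]))
    (hGr : Gr = ((2 : ℂ) / (2 * d)) • Matrix.of (fun _ _ => (1 : ℂ)) - 1)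
    (hC' : C' = σ * Gr)
    (ω : ℂ) (hω : ω = Complex.exp (2 * Real.pi * Complex.I / d))
    (v : Fin (d - 1) → (Fin 2 × Fin d → ℂ))
    (hv : ∀ (ℓ : Fin (d - 1)) (s : Fin 2) (j : Fin d),
      v ℓ (s, j) = (1 / (Real.sqrt (2 * d) : ℂ)) * ω ^ (((ℓ : ℕ) + 1) * (j : ℕ))) :
    (∀ ℓ ℓ', ∑ x, star (v ℓ x) * v ℓ' x = if ℓ = ℓ' then 1 else 0) ∧
    (∀ ℓ, C'.mulVec (v ℓ) = -(v ℓ)) ∧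
    (∀ x : Fin 2 × Fin d → ℂ, C'.mulVec x = -x →
      x ∈ Submodule.span ℂ (Set.range v)) := by
  have hdne : d ≠ 0 := by omega
  have hdc : (d : ℂ) ≠ 0 := Nat.cast_ne_zero.mpr hdne
  have h2d : (2 : ℂ) * d ≠ 0 := mul_ne_zero two_ne_zero hdc
  have hprim : IsPrimitiveRoot ω d := hω ▸ Complex.isPrimitiveRoot_exp d hdne
  have hω1 : ω ^ d = 1 := hprim.pow_eq_one
  have hω0 : ω ≠ 0 := by
    intro h; rw [h, zero_pow hdne] at hω1; exact zero_ne_one hω1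
  have hstar : (starRingEnd ℂ) ω = ω⁻¹ := by
    have habs : ‖ω‖ = 1 := by
      rw [hω, Complex.norm_exp]
      have : (2 * ↑Real.pi * Complex.I / d).re = 0 := by simp [Complex.div_re]
      rw [this, Real.exp_zero]
    rw [← Complex.inv_eq_conj habs]
  set A : ℂ := 1 / (Real.sqrt (2 * d) : ℂ) with hA
  have hsq : (Real.sqrt (2 * d) : ℂ) * (Real.sqrt (2 * d) : ℂ) = 2 * d := by
    rw [← Complex.ofReal_mul, Real.mul_self_sqrt (by positivity)]
    push_cast; ring
  have hsqne : (Real.sqrt (2 * d) : ℂ) ≠ 0 := by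
    intro h; rw [h, mul_zero] at hsq; exact h2d hsq.symm
  have hAA : A * A = 1 / (2 * (d : ℂ)) := by
    rw [hA, div_mul_div_comm, one_mul, hsq]
  have hμd : ∀ a b : ℕ, ((starRingEnd ℂ) (ω ^ a) * ω ^ b) ^ d = 1 := by
    intro a b
    rw [mul_pow, ← map_pow, ← pow_mul, ← pow_mul, mul_comm a d, mul_comm b d,
      pow_mul, pow_mul, hω1, one_pow, one_pow, _root_.map_one, one_mul]
  have hμeq : ∀ a b : ℕ, a < d → b < d →
      ((starRingEnd ℂ) (ω ^ a) * ω ^ b = 1 ↔ a = b) := by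
    intro a b ha hb
    rw [map_pow, hstar, inv_pow, inv_mul_eq_one₀ (pow_ne_zero a hω0)]
    exact ⟨fun h => hprim.pow_inj ha hb h, fun h => by rw [h]⟩
  have key : ∀ a b : ℕ, a < d → b < d →
      ∑ j : Fin d, (starRingEnd ℂ) (ω ^ (a * (j : ℕ))) * ω ^ (b * (j : ℕ))
        = if a = b then (d : ℂ) else 0 := by
    intro a b ha hb
    have h1 : ∀ j : Fin d, (starRingEnd ℂ) (ω ^ (a * (j : ℕ))) * ω ^ (b * (j : ℕ))
        = ((starRingEnd ℂ) (ω ^ a) * ω ^ b) ^ (j : ℕ) := by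
      intro j
      rw [mul_pow, pow_mul, pow_mul, map_pow]
    rw [Finset.sum_congr rfl fun j _ => h1 j, aux_sum_pow _ (hμd a b)]
    by_cases h : a = b
    · rw [if_pos ((hμeq a b ha hb).mpr h), if_pos h]
    · rw [if_neg (fun hh => h ((hμeq a b ha hb).mp hh)), if_neg h]
  have hGrmul : ∀ w : Fin 2 × Fin d → ℂ, Gr.mulVec w
      = fun p => ((2 : ℂ) / (2 * d)) * (∑ q, w q) - w p := by
    intro w; funext p
    rw [hGr, sub_mulVec, smul_mulVec, one_mulVec]
    simp [mulVec, dotProduct, Finset.mul_sum]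
  have hσmul : ∀ (w : Fin 2 × Fin d → ℂ) (s : Fin 2) (j : Fin d),
      σ.mulVec w (s, j) = w (1 - s, j) := by
    intro w s j
    rw [hσ]
    fin_cases s <;>
      simp [mulVec, dotProduct, Fintype.sum_prod_type, blockDiagonal_apply,
        Fin.sum_univ_two]
  refine ⟨?_, ?_, ?_⟩
  · -- orthonormality
    intro ℓ ℓ'
    have hℓ := ℓ.isLt
    have hℓ' := ℓ'.isLt
    have h1 : ∀ p : Fin 2 × Fin d, star (v ℓ p) * v ℓ' p
        = (A * A) * ((starRingEnd ℂ) (ω ^ (((ℓ : ℕ) + 1) * (p.2 : ℕ)))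
            * ω ^ (((ℓ' : ℕ) + 1) * (p.2 : ℕ))) := by
      rintro ⟨s, j⟩
      dsimp only
      rw [hv, hv, Complex.star_def, _root_.map_mul]
      have hAc : (starRingEnd ℂ) A = A := by
        rw [hA]; simp [Complex.conj_ofReal]
      rw [hAc]; ring
    rw [Finset.sum_congr rfl fun p _ => h1 p, ← Finset.mul_sum]
    have h2 : ∑ p : Fin 2 × Fin d, ((starRingEnd ℂ) (ω ^ (((ℓ : ℕ) + 1) * (p.2 : ℕ)))
          * ω ^ (((ℓ' : ℕ) + 1) * (p.2 : ℕ)))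
        = 2 * (if ((ℓ : ℕ) + 1) = ((ℓ' : ℕ) + 1) then (d : ℂ) else 0) := by
      rw [Fintype.sum_prod_type, Fin.sum_univ_two,
        key _ _ (by omega) (by omega), two_mul]
    rw [h2]
    by_cases h : ℓ = ℓ'
    · subst h
      rw [if_pos rfl, if_pos rfl, hAA]
      field_simp
    · rw [if_neg (fun hh => h (Fin.ext (by omega : (ℓ : ℕ) = (ℓ' : ℕ)))), if_neg h,
        mul_zero, mul_zero]
  · -- eigenvector
    intro ℓ
    have hℓ := ℓ.isLt
    have hsumv : ∑ q : Fin 2 × Fin d, v ℓ q = 0 := by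
      have h0 : ∑ j : Fin d, ω ^ (((ℓ : ℕ) + 1) * (j : ℕ)) = 0 := by
        have h1 : ∀ j : Fin d, ω ^ (((ℓ : ℕ) + 1) * (j : ℕ))
            = (ω ^ ((ℓ : ℕ) + 1)) ^ (j : ℕ) := fun j => by rw [← pow_mul]
        rw [Finset.sum_congr rfl fun j _ => h1 j,
          aux_sum_pow _ (by rw [← pow_mul, mul_comm, pow_mul, hω1, one_pow]),
          if_neg (hprim.pow_ne_one_of_pos_of_lt (Nat.succ_ne_zero _) (by omega))]
      rw [Fintype.sum_prod_type, Fin.sum_univ_two]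
      have h2 : ∀ s : Fin 2, ∑ j : Fin d, v ℓ (s, j) = 0 := by
        intro s
        rw [Finset.sum_congr rfl fun j _ => hv ℓ s j, ← Finset.mul_sum, h0, mul_zero]
      rw [h2 0, h2 1, add_zero]
    funext p
    obtain ⟨s, j⟩ := p
    rw [hC', ← mulVec_mulVec, hσmul]
    simp only [hGrmul]
    rw [hsumv, mul_zero, zero_sub, Pi.neg_apply, hv, hv]
  · -- spanning
    intro x hx
    have hxe : ∀ (s : Fin 2) (j : Fin d),
        ((2 : ℂ) / (2 * d)) * (∑ q, x q) - x (1 - s, j) = -x (s, j) := by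
      intro s j
      have h := congrFun hx (s, j)
      rw [hC', ← mulVec_mulVec, hσmul] at h
      simp only [hGrmul, Pi.neg_apply] at h
      exact h
    have h10 : (1 : Fin 2) - 0 = 1 := rfl
    have h11 : (1 : Fin 2) - 1 = 0 := rfl
    have hcS : ((2 : ℂ) / (2 * d)) * (∑ q, x q) = 0 := by
      have e0 := hxe 0 ⟨0, by omega⟩
      have e1 := hxe 1 ⟨0, by omega⟩
      rw [h10] at e0; rw [h11] at e1
      linear_combination (e0 + e1) / 2
    have hsym : ∀ j, x (1, j) = x (0, j) := by
      intro j
      have e0 := hxe 0 j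
      rw [h10] at e0
      linear_combination hcS - e0
    have hT : ∑ k : Fin d, x (0, k) = 0 := by
      have hS0 : (∑ q : Fin 2 × Fin d, x q) = 0 :=
        (mul_eq_zero.mp hcS).resolve_left (div_ne_zero two_ne_zero h2d)
      rw [Fintype.sum_prod_type, Fin.sum_univ_two,
        show (∑ k : Fin d, x (1, k)) = ∑ k : Fin d, x (0, k) from
          Finset.sum_congr rfl fun k _ => hsym k, ← two_mul] at hS0
      exact (mul_eq_zero.mp hS0).resolve_left two_ne_zero
    have hrep : x = ∑ ℓ : Fin (d - 1),
        (((Real.sqrt (2 * d) : ℂ) / d) * ∑ k : Fin d,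
          (starRingEnd ℂ) (ω ^ (((ℓ : ℕ) + 1) * (k : ℕ))) * x (0, k)) • v ℓ := by
      funext p
      obtain ⟨s, j⟩ := p
      rw [Finset.sum_apply]
      have hterm : ∀ ℓ : Fin (d - 1),
          ((((Real.sqrt (2 * d) : ℂ) / d) * ∑ k : Fin d,
            (starRingEnd ℂ) (ω ^ (((ℓ : ℕ) + 1) * (k : ℕ))) * x (0, k)) • v ℓ) (s, j)
          = ∑ k : Fin d, (1 / (d : ℂ))
              * ((starRingEnd ℂ) (ω ^ (k : ℕ)) * ω ^ (j : ℕ)) ^ ((ℓ : ℕ) + 1)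
              * x (0, k) := by
        intro ℓ
        rw [Pi.smul_apply, smul_eq_mul, hv, Finset.mul_sum, Finset.sum_mul]
        refine Finset.sum_congr rfl fun k _ => ?_
        have hpow : ((starRingEnd ℂ) (ω ^ (k : ℕ)) * ω ^ (j : ℕ)) ^ ((ℓ : ℕ) + 1)
            = (starRingEnd ℂ) (ω ^ (((ℓ : ℕ) + 1) * (k : ℕ)))
              * ω ^ (((ℓ : ℕ) + 1) * (j : ℕ)) := by
          rw [mul_pow, ← map_pow, ← pow_mul, ← pow_mul,
            mul_comm (k : ℕ), mul_comm (j : ℕ)]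
        rw [hpow, hA]
        have hc : (Real.sqrt (2 * d) : ℂ) * (1 / (Real.sqrt (2 * d) : ℂ)) = 1 :=
          mul_one_div_cancel hsqne
        linear_combination ((starRingEnd ℂ) (ω ^ (((ℓ : ℕ) + 1) * (k : ℕ)))
          * ω ^ (((ℓ : ℕ) + 1) * (j : ℕ)) * x (0, k) / d) * hc
      rw [Finset.sum_congr rfl fun ℓ _ => hterm ℓ, Finset.sum_comm]
      have hin : ∀ k : Fin d, ∑ ℓ : Fin (d - 1), (1 / (d : ℂ))
            * ((starRingEnd ℂ) (ω ^ (k : ℕ)) * ω ^ (j : ℕ)) ^ ((ℓ : ℕ) + 1)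
            * x (0, k)
          = ((if k = j then (d : ℂ) else 0) - 1) / d * x (0, k) := by
        intro k
        rw [← Finset.sum_mul, ← Finset.mul_sum,
          aux_sum_pow' hdne _ (hμd (k : ℕ) (j : ℕ))]
        have hiff : ((starRingEnd ℂ) (ω ^ (k : ℕ)) * ω ^ (j : ℕ) = 1)
            ↔ ((k : ℕ) = (j : ℕ)) := hμeq _ _ k.isLt j.isLt
        by_cases hkj : k = j
        · rw [if_pos (hiff.mpr (by rw [hkj])), if_pos hkj]; ring
        · rw [if_neg (fun hh => hkj (Fin.ext (hiff.mp hh))), if_neg hkj]; ring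
      rw [Finset.sum_congr rfl fun k _ => hin k]
      have hsplit : ∀ k : Fin d, ((if k = j then (d : ℂ) else 0) - 1) / d * x (0, k)
          = (if k = j then x (0, k) else 0) - (1 / (d : ℂ)) * x (0, k) := by
        intro k
        by_cases hkj : k = j
        · rw [if_pos hkj, if_pos hkj]; field_simp
        · rw [if_neg hkj, if_neg hkj]; field_simp; ring
      rw [Finset.sum_congr rfl fun k _ => hsplit k, Finset.sum_sub_distrib,
        Finset.sum_ite_eq' Finset.univ j (fun k => x (0, k)),
        if_pos (Finset.mem_univ j), ← Finset.mul_sum, hT, mul_zero, sub_zero]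
      fin_cases s
      · rfl
      · exact hsym j
    rw [hrep]
    exact Submodule.sum_mem _ fun ℓ _ =>
      Submodule.smul_mem _ _ (Submodule.subset_span ⟨ℓ, rfl⟩)
end

section
/- With C'_d = σ·Gr(2d), the d+1 vectors (1/√(2d))[1,…,1]^⊤ together with (1/√2)·e_j ⊗ [1, −1]^⊤ for j = 1, …, d form an orthonormal basis of ker(1 − C'_d). -/
open Matrix

private lemma key_mulVec (d : ℕ) (σ Gr C' : Matrix (Fin 2 × Fin d) (Fin 2 × Fin d) ℂ)
    (hσ : σ = Matrix.blockDiagonal (fun _ : Fin d => !![(0 : ℂ), 1; 1, 0]))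
    (hGr : Gr = ((2 : ℂ) / (2 * d)) • Matrix.of (fun _ _ => (1 : ℂ)) - 1)
    (hC' : C' = σ * Gr) (v : Fin 2 × Fin d → ℂ) (s : Fin 2) (j : Fin d) :
    C'.mulVec v (s, j) = (2 / (2 * (d : ℂ))) * (∑ y, v y) - v (s + 1, j) := by
  have hGrv : ∀ t k, Gr.mulVec v (t, k)
      = (2 / (2 * (d : ℂ))) * (∑ y, v y) - v (t, k) := by
    intro t k
    rw [hGr, sub_mulVec, smul_mulVec, one_mulVec]
    simp [mulVec, dotProduct, Finset.mul_sum]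
  rw [hC', ← mulVec_mulVec]
  have hσw : ∀ (w : Fin 2 × Fin d → ℂ), σ.mulVec w (s, j) = w (s + 1, j) := by
    intro w
    rw [hσ]
    fin_cases s <;>
      simp [mulVec, dotProduct, Fintype.sum_prod_type, blockDiagonal_apply, Fin.sum_univ_two,
        Finset.sum_ite_eq]
  rw [hσw, hGrv]

/-- The `d+1` vectors `(1/√(2d))·[1,…,1]` and `(1/√2)·e_j ⊗ [1,-1]` (`j = 1,…,d`)
form an orthonormal basis of `ker(1 - C'_d)` where `C'_d = σ · Gr(2d)`. -/
theorem moving_shift_coin_pos_eigenbasis (d : ℕ) (hd : 2 ≤ d)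
    (σ Gr C' : Matrix (Fin 2 × Fin d) (Fin 2 × Fin d) ℂ)
    (hσ : σ = Matrix.blockDiagonal (fun _ : Fin d => !![(0 : ℂ), 1; 1, 0]))
    (hGr : Gr = ((2 : ℂ) / (2 * d)) • Matrix.of (fun _ _ => (1 : ℂ)) - 1)
    (hC' : C' = σ * Gr)
    (b : Fin (d + 1) → (Fin 2 × Fin d → ℂ))
    (hb : ∀ (i : Fin (d + 1)) (s : Fin 2) (j : Fin d),
      b i (s, j) =
        if (i : ℕ) = 0 then (1 / (Real.sqrt (2 * d) : ℂ))
        else if (j : ℕ) + 1 = (i : ℕ) then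
          (1 / (Real.sqrt 2 : ℂ)) * (if s = 0 then 1 else -1)
        else 0) :
    (∀ i i', ∑ x, star (b i x) * b i' x = if i = i' then 1 else 0) ∧
    (∀ i, C'.mulVec (b i) = b i) ∧
    (∀ x : Fin 2 × Fin d → ℂ, C'.mulVec x = x →
      x ∈ Submodule.span ℂ (Set.range b)) := by
  have hdc : (d : ℂ) ≠ 0 := by simp; omega
  have hs1 : (Real.sqrt (2 * d) : ℂ) * (Real.sqrt (2 * d) : ℂ) = 2 * (d : ℂ) := by
    rw [← Complex.ofReal_mul, Real.mul_self_sqrt (by positivity)]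
    push_cast; ring
  have hs2 : (Real.sqrt 2 : ℂ) * (Real.sqrt 2 : ℂ) = 2 := by
    rw [← Complex.ofReal_mul, Real.mul_self_sqrt (by norm_num)]
    norm_num
  have hs1ne : (Real.sqrt (2 * d) : ℂ) ≠ 0 := by
    intro h
    rw [h, zero_mul] at hs1
    exact hdc (by field_simp at hs1; linear_combination (-1/2 : ℂ) * hs1 )
  have hs2ne : (Real.sqrt 2 : ℂ) ≠ 0 := by
    intro h
    rw [h, zero_mul] at hs2
    norm_num at hs2
  -- clean entry formulas
  have hb0 : ∀ s j, b 0 (s, j) = 1 / (Real.sqrt (2 * d) : ℂ) := by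
    intro s j; rw [hb]; simp
  have hbs : ∀ (i : Fin d) (s : Fin 2) (j : Fin d),
      b i.succ (s, j) = if j = i then (1 / (Real.sqrt 2 : ℂ)) * (if s = 0 then 1 else -1) else 0 := by
    intro i s j
    rw [hb]
    simp only [Fin.val_succ, Nat.add_eq_zero, and_false, if_false, add_left_inj, one_ne_zero]
    congr 1
    simp [Fin.val_eq_val]
  -- sums
  have hb0' : ∀ y : Fin 2 × Fin d, b 0 y = 1 / (Real.sqrt (2 * d) : ℂ) := fun ⟨s, j⟩ => hb0 s j
  have hS0 : ∑ y : Fin 2 × Fin d, b 0 y = (2 * (d : ℂ)) * (1 / (Real.sqrt (2 * d) : ℂ)) := by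
    rw [Finset.sum_congr rfl fun y _ => hb0' y]
    simp only [Finset.sum_const, Finset.card_univ, Fintype.card_prod, Fintype.card_fin,
      nsmul_eq_mul]
    push_cast; ring
  have hSs : ∀ i : Fin d, ∑ y : Fin 2 × Fin d, b i.succ y = 0 := by
    intro i
    simp [Fintype.sum_prod_type, Fin.sum_univ_two, hbs, Finset.sum_ite_eq']
  have hc2 : (starRingEnd ℂ) (1 / (Real.sqrt 2 : ℂ)) * (1 / (Real.sqrt 2 : ℂ)) = 1 / 2 := by
    rw [map_div₀, _root_.map_one, Complex.conj_ofReal, div_mul_div_comm, one_mul, hs2]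
  refine ⟨?_, ?_, ?_⟩
  · -- orthonormality
    intro i i'
    rcases Fin.eq_zero_or_eq_succ i with rfl | ⟨i, rfl⟩ <;>
      rcases Fin.eq_zero_or_eq_succ i' with rfl | ⟨i', rfl⟩
    · rw [if_pos rfl]
      have hc : ∀ x : Fin 2 × Fin d, star (b 0 x) * b 0 x = 1 / (2 * (d : ℂ)) := by
        rintro ⟨s, j⟩
        rw [hb0]
        simp only [Complex.star_def]
        rw [map_div₀, _root_.map_one, Complex.conj_ofReal, div_mul_div_comm, one_mul, hs1]
      simp only [hc, Finset.sum_const, Finset.card_univ, Fintype.card_prod, Fintype.card_fin,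
        nsmul_eq_mul]
      push_cast
      field_simp
    · rw [if_neg (Fin.succ_ne_zero i').symm]
      simp only [Fintype.sum_prod_type, Fin.sum_univ_two, hb0, hbs]
      rw [← Finset.sum_add_distrib]
      apply Finset.sum_eq_zero
      intro j _
      by_cases hji : j = i' <;> simp [hji] <;> ring
    · rw [if_neg (Fin.succ_ne_zero i)]
      simp only [Fintype.sum_prod_type, Fin.sum_univ_two, hb0, hbs]
      rw [← Finset.sum_add_distrib]
      apply Finset.sum_eq_zero
      intro j _
      by_cases hji : j = i <;> simp [hji] <;> ring
    · by_cases h : i = i'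
      · subst h
        rw [if_pos rfl]
        simp only [Fintype.sum_prod_type, Fin.sum_univ_two, hbs, mul_one,
          apply_ite (starRingEnd ℂ), star_zero, Complex.star_def, ite_mul, mul_ite, zero_mul,
          mul_zero, Finset.sum_ite_eq', Finset.mem_univ, if_true]
        simp only [if_neg (show ¬((1 : Fin 2) = 0) by decide), if_pos rfl, mul_neg, mul_one,
          map_neg, neg_mul, neg_neg, hc2]
        norm_num
      · rw [if_neg (fun hc => h (Fin.succ_injective d hc))]
        apply Finset.sum_eq_zero
        rintro ⟨s, j⟩ _
        rw [hbs, hbs]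
        by_cases h1 : j = i <;> by_cases h2 : j = i'
        · exact absurd (h1.symm.trans h2) h
        · simp [h1, h2, h]
        · simp [h1, h2, show ¬i' = i from fun hh => h hh.symm]
        · simp [h1, h2]
  · -- eigenvectors
    intro i
    funext y
    obtain ⟨s, j⟩ := y
    rw [key_mulVec d σ Gr C' hσ hGr hC']
    rcases Fin.eq_zero_or_eq_succ i with rfl | ⟨i, rfl⟩
    · rw [hS0, hb0, hb0]
      field_simp
      ring
    · rw [hSs, mul_zero, zero_sub, hbs, hbs]
      by_cases hji : j = i
      · rw [if_pos hji, if_pos hji]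
        fin_cases s <;> simp <;> ring
      · simp [hji]
  · -- spanning
    intro x hx
    set S := ∑ y, x y with hS
    have hxe : ∀ (s : Fin 2) (j : Fin d),
        (2 / (2 * (d : ℂ))) * S - x (s + 1, j) = x (s, j) := by
      intro s j
      rw [← key_mulVec d σ Gr C' hσ hGr hC' x s j, hx]
    set c : Fin (d + 1) → ℂ := Fin.cases ((S / (2 * (d : ℂ))) * (Real.sqrt (2 * d) : ℂ))
      (fun j => (Real.sqrt 2 : ℂ) * (x (0, j) - S / (2 * (d : ℂ)))) with hc
    have hxeq : x = ∑ i, c i • b i := by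
      funext y
      obtain ⟨s, j⟩ := y
      rw [Finset.sum_apply]
      simp only [Pi.smul_apply, smul_eq_mul]
      rw [Fin.sum_univ_succ]
      simp only [hc, Fin.cases_zero, Fin.cases_succ, hb0, hbs, mul_ite, mul_zero,
        Finset.sum_ite_eq', Finset.sum_ite_eq, Finset.mem_univ, if_true]
      have e1 : (S / (2 * (d : ℂ))) * (Real.sqrt (2 * d) : ℂ) * (1 / (Real.sqrt (2 * d) : ℂ))
          = S / (2 * (d : ℂ)) := by
        rw [mul_assoc, mul_one_div, div_self hs1ne, mul_one]
      have e2 : ∀ z : ℂ, (Real.sqrt 2 : ℂ) * z * (1 / (Real.sqrt 2 : ℂ)) = z := by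
        intro z
        rw [mul_comm ((Real.sqrt 2 : ℂ)) z, mul_assoc, mul_one_div, div_self hs2ne, mul_one]
      have e3 : ∀ z : ℂ, (Real.sqrt 2 : ℂ) * z * (1 / (Real.sqrt 2 : ℂ) * (-1)) = -z := by
        intro z
        linear_combination -(e2 z)
      fin_cases s
      · simp only [Fin.mk_zero, ite_true, if_true, eq_self_iff_true, mul_one]
        rw [e1, e2]
        ring
      · simp only [Fin.mk_one, if_neg (show ¬((1 : Fin 2) = 0) by decide)]
        rw [e1, e3]
        have h0 := hxe 0 j
        rw [show ((0 : Fin 2) + 1) = 1 from rfl] at h0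
        linear_combination -h0
    rw [hxeq]
    exact Submodule.sum_mem _ fun i _ =>
      Submodule.smul_mem _ _ (Submodule.subset_span ⟨i, rfl⟩)
end

section
/- With T̂(k) the arrowhead matrix of the previous statement, det(I − T̂(k)) = 0 and det(−I − T̂(k)) = 0 for every k ∈ [0,2π)^d; i.e. both +1 and −1 are eigenvalues of T̂(k). -/
open Matrix

private lemma arrow_aux1 (s c r D : ℂ) (hr : r ≠ 0) (hD : D ≠ 0) (hc : 1 + c ≠ 0)
    (hr2 : r * r = D) (hs2 : s ^ 2 = (1 - c) * (1 + c)) :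
    (Complex.I / r * s) * (Complex.I / r * (s / (1 + c))) = (1 / D) * (c - 1) := by
  subst hr2
  have h1 : Complex.I * Complex.I = -1 := Complex.I_mul_I
  field_simp
  linear_combination s^2 * h1 - hs2

private lemma arrow_aux2 (s c r D : ℂ) (hr : r ≠ 0) (hD : D ≠ 0) (hc : c - 1 ≠ 0)
    (hr2 : r * r = D) (hs2 : s ^ 2 = (1 - c) * (1 + c)) :
    (Complex.I / r * s) * (Complex.I / r * (s / (c - 1))) = (1 / D) * (c + 1) := by
  subst hr2
  have h1 : Complex.I * Complex.I = -1 := Complex.I_mul_I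
  field_simp
  linear_combination s^2 * h1 - hs2

/-- Both `+1` and `-1` are eigenvalues of the arrowhead discriminant matrix `T̂(k)`:
`det(I - T̂(k)) = 0` and `det(-I - T̂(k)) = 0`. -/
theorem arrowhead_pm_one_eigenvalues (d : ℕ) (hd : 1 ≤ d) (k : Fin d → ℝ)
    (hk : ∀ j, k j ∈ Set.Ico (0 : ℝ) (2 * Real.pi))
    (a₀ : ℂ) (ha₀ : a₀ = (1 / d : ℂ) * ∑ j, (Real.cos (k j) : ℂ))
    (T : Matrix (Option (Fin d)) (Option (Fin d)) ℂ)
    (hT : T = Matrix.of fun i j =>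
      match i, j with
      | none, none => a₀
      | none, some j => (-Complex.I / (Real.sqrt d : ℂ)) * (Real.sin (k j) : ℂ)
      | some i, none => (Complex.I / (Real.sqrt d : ℂ)) * (Real.sin (k i) : ℂ)
      | some i, some j => if i = j then -(Real.cos (k i) : ℂ) else 0) :
    ((1 : Matrix (Option (Fin d)) (Option (Fin d)) ℂ) - T).det = 0 ∧
    (-(1 : Matrix (Option (Fin d)) (Option (Fin d)) ℂ) - T).det = 0 := by
  have hd0 : (0:ℝ) < d := by exact_mod_cast hd
  have hrR : Real.sqrt d ≠ 0 := ne_of_gt (Real.sqrt_pos.mpr hd0)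
  have hr : (Real.sqrt d : ℂ) ≠ 0 := Complex.ofReal_ne_zero.mpr hrR
  have hr2 : (Real.sqrt d : ℂ) * (Real.sqrt d : ℂ) = (d : ℂ) := by
    rw [← Complex.ofReal_mul, Real.mul_self_sqrt hd0.le]; push_cast; ring
  have hdC : (d : ℂ) ≠ 0 := by exact_mod_cast hd0.ne'
  have hpyth : ∀ j, (Real.sin (k j) : ℂ) ^ 2 + (Real.cos (k j) : ℂ) ^ 2 = 1 := by
    intro j; exact_mod_cast congrArg (Complex.ofReal) (Real.sin_sq_add_cos_sq (k j))
  constructor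
  · rw [← Matrix.exists_mulVec_eq_zero_iff]
    by_cases h : ∃ j, Real.cos (k j) = -1
    · obtain ⟨j, hj⟩ := h
      have hs : Real.sin (k j) = 0 := by nlinarith [Real.sin_sq_add_cos_sq (k j)]
      refine ⟨Pi.single (some j) 1, ?_, ?_⟩
      · intro h0
        have := congrFun h0 (some j); simp at this
      · funext i
        rw [Matrix.mulVec_single, Pi.smul_apply, op_smul_eq_mul, mul_one, Matrix.col_apply]
        subst hT
        have hsC : (Real.sin (k j) : ℂ) = 0 := by rw [hs]; exact Complex.ofReal_zero
        have hjC : (Real.cos (k j) : ℂ) = -1 := by rw [hj]; push_cast; ring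
        rcases i with _ | i
        · simp only [Matrix.sub_apply, Matrix.one_apply, Matrix.of_apply]
          simp [hsC]
        · rcases eq_or_ne i j with rfl | hij
          · simp only [Matrix.sub_apply, Matrix.one_apply, Matrix.of_apply]
            simp [hjC]
          · simp only [Matrix.sub_apply, Matrix.one_apply, Matrix.of_apply]
            simp [hij]
    · push_neg at h
      have h' : ∀ j, (1 : ℂ) + (Real.cos (k j) : ℂ) ≠ 0 := by
        intro j hj
        have h1 : ((1 + Real.cos (k j) : ℝ) : ℂ) = 0 := by
          rw [Complex.ofReal_add, Complex.ofReal_one]; exact hj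
        have h2 : (1 : ℝ) + Real.cos (k j) = 0 := by exact_mod_cast h1
        exact h j (by linarith)
      refine ⟨fun o => o.elim 1 fun j =>
        Complex.I / (Real.sqrt d : ℂ) * ((Real.sin (k j) : ℂ) / (1 + (Real.cos (k j) : ℂ))), ?_, ?_⟩
      · intro h0
        have := congrFun h0 none; simp at this
      · funext i
        rcases i with _ | i
        · simp only [Matrix.mulVec, dotProduct, Pi.zero_apply]
          rw [Fintype.sum_option]
          simp only [hT, Matrix.sub_apply, Matrix.one_apply, Matrix.of_apply, Option.elim]
          have hterm : ∀ j : Fin d,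
              ((if (none : Option (Fin d)) = some j then (1:ℂ) else 0) -
                (-Complex.I / (Real.sqrt d : ℂ)) * (Real.sin (k j) : ℂ)) *
                (Complex.I / (Real.sqrt d : ℂ) *
                  ((Real.sin (k j) : ℂ) / (1 + (Real.cos (k j) : ℂ)))) =
              (1 / d : ℂ) * ((Real.cos (k j) : ℂ) - 1) := by
            intro j
            rw [if_neg (by simp)]
            have hs2 : (Real.sin (k j) : ℂ) ^ 2 =
                (1 - (Real.cos (k j) : ℂ)) * (1 + (Real.cos (k j) : ℂ)) := by
              linear_combination hpyth j
            linear_combination arrow_aux1 (Real.sin (k j) : ℂ) (Real.cos (k j) : ℂ)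
              (Real.sqrt d : ℂ) (d : ℂ) hr hdC (h' j) hr2 hs2
          rw [Finset.sum_congr rfl fun j _ => hterm j]
          rw [show (∑ j : Fin d, (1 / d : ℂ) * ((Real.cos (k j) : ℂ) - 1)) =
              (1/d : ℂ) * ((∑ j, (Real.cos (k j) : ℂ)) - d) by
            rw [← Finset.mul_sum, Finset.sum_sub_distrib, Finset.sum_const, Finset.card_univ,
              Fintype.card_fin]; push_cast; ring]
          simp only [if_true]
          have hone : (1 / (d : ℂ)) * (d : ℂ) = 1 := by
            rw [one_div_mul_cancel hdC]
          linear_combination (-1 : ℂ) * ha₀ + (-1 : ℂ) * hone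
        · simp only [Matrix.mulVec, dotProduct, Pi.zero_apply]
          rw [Fintype.sum_option]
          simp only [hT, Matrix.sub_apply, Matrix.one_apply, Matrix.of_apply, Option.elim]
          rw [Finset.sum_eq_single i]
          · rw [if_neg (by simp), if_pos rfl, if_pos rfl]
            linear_combination (Complex.I / (Real.sqrt d : ℂ)) *
              div_mul_cancel₀ ((Real.sin (k i) : ℂ)) (h' i)
          · intro b _ hb
            rw [if_neg (by simpa using (Ne.symm hb)), if_neg (fun hh => hb (by simpa using hh.symm))]
            ring
          · intro hi; exact absurd (Finset.mem_univ i) hi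
  · rw [← Matrix.exists_mulVec_eq_zero_iff]
    by_cases h : ∃ j, Real.cos (k j) = 1
    · obtain ⟨j, hj⟩ := h
      have hs : Real.sin (k j) = 0 := by nlinarith [Real.sin_sq_add_cos_sq (k j)]
      refine ⟨Pi.single (some j) 1, ?_, ?_⟩
      · intro h0
        have := congrFun h0 (some j); simp at this
      · funext i
        rw [Matrix.mulVec_single, Pi.smul_apply, op_smul_eq_mul, mul_one, Matrix.col_apply]
        subst hT
        have hsC : (Real.sin (k j) : ℂ) = 0 := by rw [hs]; exact Complex.ofReal_zero
        have hjC : (Real.cos (k j) : ℂ) = 1 := by rw [hj]; push_cast; ring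
        rcases i with _ | i
        · simp only [Matrix.sub_apply, Matrix.neg_apply, Matrix.one_apply, Matrix.of_apply]
          simp [hsC]
        · rcases eq_or_ne i j with rfl | hij
          · simp only [Matrix.sub_apply, Matrix.neg_apply, Matrix.one_apply, Matrix.of_apply]
            simp [hjC]
          · simp only [Matrix.sub_apply, Matrix.neg_apply, Matrix.one_apply, Matrix.of_apply]
            simp [hij]
    · push_neg at h
      have h' : ∀ j, (Real.cos (k j) : ℂ) - 1 ≠ 0 := by
        intro j hj
        have h1 : ((Real.cos (k j) - 1 : ℝ) : ℂ) = 0 := by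
          rw [Complex.ofReal_sub, Complex.ofReal_one]; exact hj
        have h2 : Real.cos (k j) - 1 = 0 := by exact_mod_cast h1
        exact h j (by linarith)
      refine ⟨fun o => o.elim 1 fun j =>
        Complex.I / (Real.sqrt d : ℂ) * ((Real.sin (k j) : ℂ) / ((Real.cos (k j) : ℂ) - 1)), ?_, ?_⟩
      · intro h0
        have := congrFun h0 none; simp at this
      · funext i
        rcases i with _ | i
        · simp only [Matrix.mulVec, dotProduct, Pi.zero_apply]
          rw [Fintype.sum_option]
          simp only [hT, Matrix.sub_apply, Matrix.neg_apply, Matrix.one_apply, Matrix.of_apply,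
            Option.elim]
          have hterm : ∀ j : Fin d,
              (-(if (none : Option (Fin d)) = some j then (1:ℂ) else 0) -
                (-Complex.I / (Real.sqrt d : ℂ)) * (Real.sin (k j) : ℂ)) *
                (Complex.I / (Real.sqrt d : ℂ) *
                  ((Real.sin (k j) : ℂ) / ((Real.cos (k j) : ℂ) - 1))) =
              (1 / d : ℂ) * ((Real.cos (k j) : ℂ) + 1) := by
            intro j
            rw [if_neg (by simp)]
            have hs2 : (Real.sin (k j) : ℂ) ^ 2 =
                (1 - (Real.cos (k j) : ℂ)) * (1 + (Real.cos (k j) : ℂ)) := by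
              linear_combination hpyth j
            linear_combination arrow_aux2 (Real.sin (k j) : ℂ) (Real.cos (k j) : ℂ)
              (Real.sqrt d : ℂ) (d : ℂ) hr hdC (h' j) hr2 hs2
          rw [Finset.sum_congr rfl fun j _ => hterm j]
          rw [show (∑ j : Fin d, (1 / d : ℂ) * ((Real.cos (k j) : ℂ) + 1)) =
              (1/d : ℂ) * ((∑ j, (Real.cos (k j) : ℂ)) + d) by
            rw [← Finset.mul_sum, Finset.sum_add_distrib, Finset.sum_const, Finset.card_univ,
              Fintype.card_fin]; push_cast; ring]
          simp only [if_true]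
          have hone : (1 / (d : ℂ)) * (d : ℂ) = 1 := by
            rw [one_div_mul_cancel hdC]
          linear_combination (-1 : ℂ) * ha₀ + hone
        · simp only [Matrix.mulVec, dotProduct, Pi.zero_apply]
          rw [Fintype.sum_option]
          simp only [hT, Matrix.sub_apply, Matrix.neg_apply, Matrix.one_apply, Matrix.of_apply,
            Option.elim]
          rw [Finset.sum_eq_single i]
          · rw [if_neg (by simp), if_pos rfl, if_pos rfl]
            linear_combination (Complex.I / (Real.sqrt d : ℂ)) *
              div_mul_cancel₀ ((Real.sin (k i) : ℂ)) (h' i)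
          · intro b _ hb
            rw [if_neg (by simpa using (Ne.symm hb)), if_neg (fun hh => hb (by simpa using hh.symm))]
            ring
          · intro hi; exact absurd (Finset.mem_univ i) hi
end

section
/- Let U, L, Λ be linear maps with UL = LΛ, where L: ℂ^{2q} → H and Λ: ℂ^{2q} → ℂ^{2q} is invertible, and suppose ker L = ker(κ'² I − Λ²). Then for λ ∉ {κ', −κ'}, a nonzero vector ψ ∈ ran L satisfies Uψ = λψ if and only if ψ = Lφ for some φ with Λφ = λφ and φ ∉ ker L. -/
open Matrix

/-- Abstract eigenvector lifting: if `UL = LΛ` with `Λ` invertible and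
`ker L = ker(κ'² I - Λ²)`, then for `λ ∉ {κ', -κ'}`, a nonzero `ψ ∈ ran L` is a
`λ`-eigenvector of `U` iff `ψ = Lφ` for some `φ` with `Λφ = λφ` and `φ ∉ ker L`. -/
theorem eigenvector_lifting (N q : ℕ) (κ' lam : ℂ)
    (hκ' : ‖κ'‖ = 1)
    (U : Matrix (Fin N) (Fin N) ℂ)
    (L : Matrix (Fin N) (Fin (2 * q)) ℂ)
    (Λ : Matrix (Fin (2 * q)) (Fin (2 * q)) ℂ)
    (hUL : U * L = L * Λ) (hΛ : IsUnit Λ)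
    (hker : ∀ φ : Fin (2 * q) → ℂ,
      L.mulVec φ = 0 ↔
        (κ' ^ 2 • (1 : Matrix (Fin (2 * q)) (Fin (2 * q)) ℂ) - Λ * Λ).mulVec φ = 0)
    (hlam : lam ≠ κ' ∧ lam ≠ -κ') :
    ∀ ψ : Fin N → ℂ,
      (ψ ≠ 0 ∧ (∃ φ₀, ψ = L.mulVec φ₀) ∧ U.mulVec ψ = lam • ψ) ↔
        ∃ φ, ψ = L.mulVec φ ∧ Λ.mulVec φ = lam • φ ∧ L.mulVec φ ≠ 0 := by
  intro ψ
  have hc : κ' ^ 2 - lam ^ 2 ≠ 0 := by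
    intro h
    rcases mul_eq_zero.mp (show (κ' - lam) * (κ' + lam) = 0 by linear_combination h) with h' | h'
    · exact hlam.1 (sub_eq_zero.mp h').symm
    · exact hlam.2 (by linear_combination h')
  constructor
  · rintro ⟨hψ, ⟨φ₀, rfl⟩, hU⟩
    have hLΛ : L.mulVec (Λ.mulVec φ₀) = lam • L.mulVec φ₀ := by
      rw [mulVec_mulVec, ← hUL, ← mulVec_mulVec, hU]
    have h0 : L.mulVec (Λ.mulVec φ₀ - lam • φ₀) = 0 := by
      rw [mulVec_sub, mulVec_smul, hLΛ, sub_self]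
    have h1 := (hker _).mp h0
    have hLΛ2 : L.mulVec ((Λ * Λ).mulVec φ₀) = (lam ^ 2) • L.mulVec φ₀ := by
      rw [← mulVec_mulVec, mulVec_mulVec, ← hUL, ← mulVec_mulVec, hLΛ, mulVec_smul, hU,
        smul_smul, sq]
    have hkey : L.mulVec (κ' ^ 2 • φ₀ - (Λ * Λ).mulVec φ₀)
        = (κ' ^ 2 - lam ^ 2) • L.mulVec φ₀ := by
      rw [mulVec_sub, mulVec_smul, hLΛ2, sub_smul]
    have hΛx : Λ.mulVec (κ' ^ 2 • φ₀ - (Λ * Λ).mulVec φ₀)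
        = lam • (κ' ^ 2 • φ₀ - (Λ * Λ).mulVec φ₀) := by
      simp only [mulVec_sub, sub_mulVec, smul_mulVec, one_mulVec, mulVec_smul,
        mulVec_mulVec, smul_sub, sub_mul, smul_mul_assoc, one_mul, mul_assoc] at h1 ⊢
      linear_combination (norm := module) h1
    refine ⟨(κ' ^ 2 - lam ^ 2)⁻¹ • (κ' ^ 2 • φ₀ - (Λ * Λ).mulVec φ₀), ?_, ?_, ?_⟩
    · rw [mulVec_smul, hkey, smul_smul, inv_mul_cancel₀ hc, one_smul]
    · rw [mulVec_smul, hΛx, smul_comm]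
    · rw [mulVec_smul, hkey, smul_smul, inv_mul_cancel₀ hc, one_smul]
      exact hψ
  · rintro ⟨φ, rfl, hΛφ, hLφ⟩
    refine ⟨hLφ, ⟨φ, rfl⟩, ?_⟩
    rw [mulVec_mulVec, hUL, ← mulVec_mulVec, hΛφ, mulVec_smul]
end
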